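/- Let G be a group, let A be a normal abelian subgroup of G, let δ : G → A be a derivation with respect to the conjugation action, and let D denote the normal closure in G of the image δ(G). Let i ≥ 1 and suppose the iterated commutator subgroup [A, G, …, G] with i copies of G is trivial. Then for every x in γ_i(G), the i-th term of the lower central series of G, the element δ(x) lies in the iterated commutator subgroup [D, G, …, G] with i−1 copies of G (which for i = 1 is D itself). -/

import Mathlib

open scoped commutatorElement

/-- The iterated commutator subgroup `[H, G, …, G]` with `n` copies of `G`:
`iteratedCommutator H 0 = H` and `iteratedCommutator H (n+1) = ⁅iteratedCommutator H n, G⁆`. -/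
def iteratedCommutator {G : Type*} [Group G] (H : Subgroup G) : ℕ → Subgroup G
  | 0 => H
  | n + 1 => ⁅iteratedCommutator H n, (⊤ : Subgroup G)⁆

section Aux

variable {G : Type*} [Group G]

theorem iteratedCommutator_normal (H : Subgroup G) (hH : H.Normal) :
    ∀ n, (iteratedCommutator H n).Normal
  | 0 => hH
  | n + 1 => by
    haveI := iteratedCommutator_normal H hH n
    exact Subgroup.commutator_normal _ _

theorem iteratedCommutator_shift (H : Subgroup G) :
    ∀ n, iteratedCommutator ⁅H, (⊤ : Subgroup G)⁆ n = iteratedCommutator H (n + 1)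
  | 0 => rfl
  | n + 1 => by
    show ⁅iteratedCommutator ⁅H, (⊤ : Subgroup G)⁆ n, (⊤ : Subgroup G)⁆ = _
    rw [iteratedCommutator_shift H n]
    rfl

/-- The general three subgroups lemma. -/
theorem three_subgroups {H₁ H₂ H₃ L : Subgroup G} [L.Normal]
    (h1 : ⁅⁅H₂, H₃⁆, H₁⁆ ≤ L) (h2 : ⁅⁅H₃, H₁⁆, H₂⁆ ≤ L) : ⁅⁅H₁, H₂⁆, H₃⁆ ≤ L := by
  let π := QuotientGroup.mk' L
  have key : ∀ K : Subgroup G, K.map π = ⊥ ↔ K ≤ L := fun K => by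
    rw [Subgroup.map_eq_bot_iff, QuotientGroup.ker_mk']
  rw [← key]
  rw [Subgroup.map_commutator, Subgroup.map_commutator]
  exact Subgroup.commutator_commutator_eq_bot_of_rotate
    (by rw [← Subgroup.map_commutator, ← Subgroup.map_commutator, key]; exact h1)
    (by rw [← Subgroup.map_commutator, ← Subgroup.map_commutator, key]; exact h2)

theorem commutator_lcs_le : ∀ (m : ℕ) (N : Subgroup G), N.Normal →
    ⁅N, (⊤ : Subgroup G).lowerCentralSeries m⁆ ≤ iteratedCommutator N (m + 1)
  | 0, N, _ => le_of_eq rfl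
  | m + 1, N, hN => by
    haveI := hN
    haveI := iteratedCommutator_normal N hN (m + 2)
    have hlcs : (⊤ : Subgroup G).lowerCentralSeries (m + 1) = ⁅(⊤ : Subgroup G).lowerCentralSeries m, (⊤ : Subgroup G)⁆ := rfl
    rw [Subgroup.commutator_comm, hlcs]
    refine three_subgroups ?_ ?_
    · -- ⁅⁅⊤, N⁆, lcs m⁆ ≤ iC N (m+2)
      rw [Subgroup.commutator_comm (⊤ : Subgroup G) N]
      refine le_trans (commutator_lcs_le m ⁅N, ⊤⁆ (Subgroup.commutator_normal N ⊤)) ?_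
      rw [iteratedCommutator_shift]
    · -- ⁅⁅N, lcs m⁆, ⊤⁆ ≤ iC N (m+2)
      exact Subgroup.commutator_mono (commutator_lcs_le m N hN) le_rfl

theorem commutator_sup_le {H K L M : Subgroup G} [M.Normal]
    (h1 : ⁅H, L⁆ ≤ M) (h2 : ⁅K, L⁆ ≤ M) : ⁅H ⊔ K, L⁆ ≤ M := by
  rw [Subgroup.commutator_le] at h1 h2 ⊢
  intro x hx l hl
  have hx' : x ∈ Subgroup.closure ((H : Set G) ∪ (K : Set G)) := by
    rwa [Subgroup.closure_union, Subgroup.closure_eq, Subgroup.closure_eq]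
  clear hx
  induction hx' using Subgroup.closure_induction with
  | mem z hz =>
    rcases hz with hz | hz
    · exact h1 z hz l hl
    · exact h2 z hz l hl
  | one => simpa using M.one_mem
  | mul z w _ _ hz hw =>
    have : ⁅z * w, l⁆ = z * ⁅w, l⁆ * z⁻¹ * ⁅z, l⁆ := by
      simp only [commutatorElement_def]; group
    rw [this]
    exact M.mul_mem (Subgroup.Normal.conj_mem ‹M.Normal› _ hw z) hz
  | inv z _ hz =>
    have : ⁅z⁻¹, l⁆ = z⁻¹ * ⁅z, l⁆⁻¹ * z := by
      simp only [commutatorElement_def]; group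
    rw [this]
    have h := Subgroup.Normal.conj_mem ‹M.Normal› _ (M.inv_mem hz) z⁻¹
    rwa [inv_inv] at h

end Aux

theorem derivation_main
    {G : Type*} [Group G] (A : Subgroup G) (hA : A.Normal)
    (hab : ∀ a b : G, a ∈ A → b ∈ A → a * b = b * a)
    (δ : G → A)
    (hδ : ∀ g h : G, (δ (g * h) : G) = h⁻¹ * (δ g : G) * h * (δ h : G)) :
    ∀ n : ℕ, ∀ x ∈ (⊤ : Subgroup G).lowerCentralSeries n,
      (δ x : G) ∈ iteratedCommutator
          (Subgroup.normalClosure (Set.range fun g : G => (δ g : G))) n ⊔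
        iteratedCommutator A (n + 1) := by
  set D := Subgroup.normalClosure (Set.range fun g : G => (δ g : G)) with hD
  haveI hDn : D.Normal := Subgroup.normalClosure_normal
  have hδ1 : (δ 1 : G) = 1 := by
    have h := hδ 1 1
    rw [one_mul, inv_one, one_mul, mul_one] at h
    exact left_eq_mul.mp h
  have hδinv : ∀ x : G, (δ x⁻¹ : G) = x * (δ x : G)⁻¹ * x⁻¹ := by
    intro x
    have h := hδ x x⁻¹
    rw [mul_inv_cancel, hδ1, inv_inv] at h
    have h' : (x * (δ x : G) * x⁻¹) * (δ x⁻¹ : G) = 1 := h.symm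
    have h2 : (δ x⁻¹ : G) =
        (x * (δ x : G) * x⁻¹)⁻¹ * ((x * (δ x : G) * x⁻¹) * (δ x⁻¹ : G)) := by group
    rw [h2, h', mul_one]
    group
  intro n
  induction n with
  | zero =>
    intro x _
    exact Subgroup.mem_sup_left (Subgroup.subset_normalClosure ⟨x, rfl⟩)
  | succ n ih =>
    haveI hiDn : (iteratedCommutator D (n + 1)).Normal :=
      iteratedCommutator_normal D hDn (n + 1)
    haveI hiAn : (iteratedCommutator A (n + 2)).Normal :=
      iteratedCommutator_normal A hA (n + 2)
    set K := iteratedCommutator D (n + 1) ⊔ iteratedCommutator A (n + 2) with hK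
    haveI hKn : K.Normal := Subgroup.sup_normal _ _
    let S : Subgroup G :=
      { carrier := { x | (δ x : G) ∈ K }
        one_mem' := by simp only [Set.mem_setOf_eq, hδ1]; exact K.one_mem
        mul_mem' := by
          intro a b ha hb
          simp only [Set.mem_setOf_eq] at ha hb ⊢
          rw [hδ a b]
          exact K.mul_mem (by simpa using hKn.conj_mem _ ha b⁻¹) hb
        inv_mem' := by
          intro a ha
          simp only [Set.mem_setOf_eq] at ha ⊢
          rw [hδinv a]
          exact hKn.conj_mem _ (K.inv_mem ha) a }
    intro x hx
    suffices hle : (⊤ : Subgroup G).lowerCentralSeries (n + 1) ≤ S from hle hx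
    have : (⊤ : Subgroup G).lowerCentralSeries (n + 1) = ⁅(⊤ : Subgroup G).lowerCentralSeries n, (⊤ : Subgroup G)⁆ := rfl
    rw [this, Subgroup.commutator_le]
    intro y hy g _
    show (δ ⁅y, g⁆ : G) ∈ K
    set a : G := (δ y : G) with ha
    set b : G := (δ g : G) with hb
    have hbD : b ∈ D := Subgroup.subset_normalClosure ⟨g, rfl⟩
    have hcomm : b * a⁻¹ = a⁻¹ * b := by
      have h := hab a b (δ y).2 (δ g).2
      calc b * a⁻¹ = a⁻¹ * (a * b) * a⁻¹ := by group
        _ = a⁻¹ * (b * a) * a⁻¹ := by rw [h]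
        _ = a⁻¹ * b := by group
    have key : (δ ⁅y, g⁆ : G) = (g * (y * ⁅g⁻¹, a⁆ * y⁻¹) * g⁻¹) * (g * ⁅y, b⁆ * g⁻¹) := by
      have e1 := hδ y g
      have e2 := hδ (y * g) y⁻¹
      have e3 := hδ (y * g * y⁻¹) g⁻¹
      rw [e1, hδinv y] at e2
      rw [e2, hδinv g] at e3
      show (δ (y * g * y⁻¹ * g⁻¹) : G) = _
      rw [e3]
      simp only [commutatorElement_def]
      rw [show (g⁻¹)⁻¹ * (y⁻¹⁻¹ * (g⁻¹ * ↑(δ y) * g * ↑(δ g)) * y⁻¹ * (y * (↑(δ y))⁻¹ * y⁻¹)) *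
          g⁻¹ * (g * (↑(δ g))⁻¹ * g⁻¹) =
          g * y * g⁻¹ * a * g * (b * a⁻¹) * y⁻¹ * b⁻¹ * g⁻¹ by rw [ha, hb]; group, hcomm]
      group
    rw [key]
    have h1 : ⁅g⁻¹, a⁆ ∈ K := by
      have haK : a ∈ iteratedCommutator D n ⊔ iteratedCommutator A (n + 1) := ih y hy
      have hsup : ⁅iteratedCommutator D n ⊔ iteratedCommutator A (n + 1),
          (⊤ : Subgroup G)⁆ ≤ K := by
        refine commutator_sup_le (le_sup_left.trans_eq' rfl) (le_sup_right.trans_eq' rfl)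
      have hm := Subgroup.commutator_mem_commutator haK (Subgroup.mem_top g⁻¹)
      rw [← commutatorElement_inv a g⁻¹]
      exact K.inv_mem (hsup hm)
    have h2 : ⁅y, b⁆ ∈ K := by
      apply Subgroup.mem_sup_left
      have : ⁅D, (⊤ : Subgroup G).lowerCentralSeries n⁆ ≤ iteratedCommutator D (n + 1) :=
        commutator_lcs_le n D hDn
      apply this
      rw [Subgroup.commutator_comm]
      exact Subgroup.commutator_mem_commutator hy hbD
    exact K.mul_mem (hKn.conj_mem _ (hKn.conj_mem _ h1 y) g) (hKn.conj_mem _ h2 g)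

/-- If `A` is a normal abelian subgroup of `G`, `δ : G → A` is a derivation for the
conjugation action, `D` is the normal closure of the image of `δ`, and the iterated
commutator `[A, G, …, G]` with `i` copies of `G` is trivial (`i ≥ 1`), then `δ` maps the
`i`-th term `γ_i(G)` of the lower central series (which is `(⊤ : Subgroup G).lowerCentralSeries (i - 1)`)
into the iterated commutator `[D, G, …, G]` with `i - 1` copies of `G`. -/
theorem derivation_lowerCentralSeries_mem
    {G : Type*} [Group G] (A : Subgroup G) (hA : A.Normal)
    (hab : ∀ a b : G, a ∈ A → b ∈ A → a * b = b * a)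
    (δ : G → A)
    (hδ : ∀ g h : G, (δ (g * h) : G) = h⁻¹ * (δ g : G) * h * (δ h : G))
    (i : ℕ) (hi : 1 ≤ i)
    (htriv : iteratedCommutator A i = ⊥) :
    ∀ x ∈ (⊤ : Subgroup G).lowerCentralSeries (i - 1),
      (δ x : G) ∈
        iteratedCommutator
          (Subgroup.normalClosure (Set.range fun g : G => (δ g : G))) (i - 1) := by
  intro x hx
  obtain ⟨n, rfl⟩ : ∃ n, i = n + 1 := ⟨i - 1, (Nat.succ_pred_eq_of_pos hi).symm⟩
  simp only [Nat.add_sub_cancel] at hx ⊢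
  have := derivation_main A hA hab δ hδ n x hx
  rwa [htriv, sup_bot_eq] at this
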